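/- Let X be a complex Banach space and Δ : S(c₀(Γ)) → S(X) a surjective isometry. Then for each n ∈ Γ and each λ ∈ 𝕋, Δ(λe_n) ∈ {λΔ(e_n), λ̄Δ(e_n)}. -/

import Mathlib

open ZeroAtInfty Metric Filter Complex

/-- The canonical basis vector `e n` of `c₀(Γ)`. -/
noncomputable def stdBasis {Γ : Type*} [TopologicalSpace Γ] [DiscreteTopology Γ] [DecidableEq Γ]
    (n : Γ) : C₀(Γ, ℂ) where
  toFun := fun k => if k = n then 1 else 0
  continuous_toFun := continuous_of_discreteTopology
  zero_at_infty' := by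
    have h : (fun k => if k = n then (1 : ℂ) else 0) =ᶠ[Filter.cocompact Γ] 0 := by
      refine Filter.mem_cocompact.2 ⟨{n}, isCompact_singleton, ?_⟩
      intro k hk
      simp only [Set.mem_compl_iff, Set.mem_singleton_iff] at hk
      simp [hk]
    exact Filter.Tendsto.congr' h.symm tendsto_const_nhds

namespace TingleyAux

set_option linter.unusedSectionVars false
set_option maxHeartbeats 1000000

/-! ### Scalar lemmas -/

lemma norm_sq_eq_normSq (z : ℂ) : ‖z‖ ^ 2 = Complex.normSq z := by
  rw [Complex.sq_norm]

lemma normSq_one_of_norm_one {z : ℂ} (h : ‖z‖ = 1) : Complex.normSq z = 1 := by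
  have := norm_sq_eq_normSq z; rw [h] at this; nlinarith

lemma scalar_same_re {a b : ℂ} (ha : ‖a‖ = 1) (hb : ‖b‖ = 1) (h : a.re = b.re) :
    a = b ∨ a = (starRingEnd ℂ) b := by
  have ha2 : a.re ^ 2 + a.im ^ 2 = 1 := by
    have := normSq_one_of_norm_one ha; rw [Complex.normSq_apply] at this; nlinarith
  have hb2 : b.re ^ 2 + b.im ^ 2 = 1 := by
    have := normSq_one_of_norm_one hb; rw [Complex.normSq_apply] at this; nlinarith
  have hre2 : a.re ^ 2 = b.re ^ 2 := by rw [h]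
  have him : a.im = b.im ∨ a.im = -b.im := by
    have hfac : (a.im - b.im) * (a.im + b.im) = 0 := by linear_combination ha2 - hb2 - hre2
    rcases mul_eq_zero.1 hfac with h1 | h1
    · left; linarith
    · right; linarith
  rcases him with h1 | h1
  · left; exact Complex.ext h h1
  · right; exact Complex.ext (by simpa using h) (by simpa using h1)

/-- `‖a - b‖ = 2` with both in the unit disk forces `b = -a` and `‖a‖ = 1`. -/
lemma diam_two {a b : ℂ} (ha : ‖a‖ ≤ 1) (hb : ‖b‖ ≤ 1) (h : ‖a - b‖ = 2) :
    b = -a ∧ ‖a‖ = 1 := by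
  have htri : ‖a - b‖ ≤ ‖a‖ + ‖b‖ := by
    simpa [sub_eq_add_neg] using norm_add_le a (-b)
  have hna : ‖a‖ = 1 := by nlinarith [norm_nonneg a, norm_nonneg b]
  have hnb : ‖b‖ = 1 := by nlinarith [norm_nonneg a, norm_nonneg b]
  have hsq : Complex.normSq (a - b) = 4 := by
    have := norm_sq_eq_normSq (a - b); rw [h] at this; nlinarith
  rw [Complex.normSq_sub] at hsq
  have hA := normSq_one_of_norm_one hna
  have hB := normSq_one_of_norm_one hnb
  have hre : (a * (starRingEnd ℂ) b).re = -1 := by rw [hA, hB] at hsq; linarith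
  have habs : Complex.normSq (a * (starRingEnd ℂ) b) = 1 := by
    rw [Complex.normSq_mul, Complex.normSq_conj, hA, hB]; ring
  have him : (a * (starRingEnd ℂ) b).im = 0 := by
    rw [Complex.normSq_apply] at habs; nlinarith
  have heq : a * (starRingEnd ℂ) b = -1 := Complex.ext (by simp [hre]) (by simp [him])
  have hmul : a * ((starRingEnd ℂ) b * b) = -b := by rw [← mul_assoc, heq]; ring
  have hbb : (starRingEnd ℂ) b * b = 1 := by
    rw [mul_comm, Complex.mul_conj]
    norm_cast
  rw [hbb, mul_one] at hmul
  exact ⟨by rw [hmul]; ring, hna⟩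

lemma near_both {w : ℂ} (h1 : ‖w - 1‖ ≤ 1) (h2 : ‖w + 1‖ ≤ 1) : w = 0 := by
  have e1 : Complex.normSq (w - 1) ≤ 1 := by
    have := norm_sq_eq_normSq (w - 1); nlinarith [norm_nonneg (w - 1)]
  have e2 : Complex.normSq (w + 1) ≤ 1 := by
    have := norm_sq_eq_normSq (w + 1); nlinarith [norm_nonneg (w + 1)]
  rw [Complex.normSq_sub] at e1
  rw [Complex.normSq_add] at e2
  simp only [map_one, mul_one, Complex.normSq_one] at e1 e2
  have h3 := Complex.normSq_nonneg w
  have h0 : Complex.normSq w = 0 := by linarith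
  exact Complex.normSq_eq_zero.1 h0

lemma disk_lemma {γ α μ : ℂ} (hγ : ‖γ‖ = 1) (hα : ‖α‖ = 1) (hμ : ‖μ‖ = 1)
    (h1 : ‖γ - μ‖ ≤ ‖α - 1‖) (h2 : ‖γ + μ‖ ≤ ‖α + 1‖) :
    γ = α * μ ∨ γ = (starRingEnd ℂ) α * μ := by
  set δ := γ * (starRingEnd ℂ) μ with hδdef
  have hδ : ‖δ‖ = 1 := by
    rw [hδdef, norm_mul, RCLike.norm_conj, hγ, hμ]; norm_num
  have hμ1 : μ * (starRingEnd ℂ) μ = 1 := by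
    rw [Complex.mul_conj]; norm_cast; exact normSq_one_of_norm_one hμ
  have hδμ : δ * μ = γ := by
    rw [hδdef, mul_assoc, mul_comm ((starRingEnd ℂ) μ) μ, hμ1, mul_one]
  have key1 : ‖δ - 1‖ ≤ ‖α - 1‖ := by
    have hh : (δ - 1) * μ = γ - μ := by rw [sub_mul, hδμ, one_mul]
    calc ‖δ - 1‖ = ‖(δ - 1) * μ‖ := by rw [norm_mul, hμ, mul_one]
    _ = ‖γ - μ‖ := by rw [hh]
    _ ≤ _ := h1
  have key2 : ‖δ + 1‖ ≤ ‖α + 1‖ := by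
    have hh : (δ + 1) * μ = γ + μ := by rw [add_mul, hδμ, one_mul]
    calc ‖δ + 1‖ = ‖(δ + 1) * μ‖ := by rw [norm_mul, hμ, mul_one]
    _ = ‖γ + μ‖ := by rw [hh]
    _ ≤ _ := h2
  have hδ2 := normSq_one_of_norm_one hδ
  have hα2 := normSq_one_of_norm_one hα
  have c1 : Complex.normSq (δ - 1) ≤ Complex.normSq (α - 1) := by
    have t1 := norm_sq_eq_normSq (δ - 1); have t2 := norm_sq_eq_normSq (α - 1)
    nlinarith [norm_nonneg (δ - 1), norm_nonneg (α - 1)]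
  have c2 : Complex.normSq (δ + 1) ≤ Complex.normSq (α + 1) := by
    have t1 := norm_sq_eq_normSq (δ + 1); have t2 := norm_sq_eq_normSq (α + 1)
    nlinarith [norm_nonneg (δ + 1), norm_nonneg (α + 1)]
  rw [Complex.normSq_sub, Complex.normSq_sub] at c1
  rw [Complex.normSq_add, Complex.normSq_add] at c2
  simp only [map_one, mul_one, Complex.normSq_one] at c1 c2
  rw [hδ2, hα2] at c1 c2
  have hre : δ.re = α.re := by linarith
  rcases scalar_same_re hδ hα hre with h | h
  · left; rw [← hδμ, h]
  · right; rw [← hδμ, h]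

/-! ### c₀ infrastructure -/

variable {Γ : Type*} [TopologicalSpace Γ] [DiscreteTopology Γ] [DecidableEq Γ]

lemma coord_le_norm (f : C₀(Γ, ℂ)) (k : Γ) : ‖f k‖ ≤ ‖f‖ := by
  rw [← ZeroAtInftyContinuousMap.norm_toBCF_eq_norm]
  exact BoundedContinuousFunction.norm_coe_le_norm f.toBCF k

lemma norm_le_of (f : C₀(Γ, ℂ)) {C : ℝ} (hC : 0 ≤ C) (h : ∀ k, ‖f k‖ ≤ C) : ‖f‖ ≤ C := by
  rw [← ZeroAtInftyContinuousMap.norm_toBCF_eq_norm]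
  exact (BoundedContinuousFunction.norm_le hC).2 h

lemma exists_attain (f : C₀(Γ, ℂ)) (hf : ‖f‖ ≠ 0) : ∃ k, ‖f k‖ = ‖f‖ := by
  set r := ‖f‖ with hr
  have hrpos : 0 < r := lt_of_le_of_ne (norm_nonneg f) (Ne.symm hf)
  have htend : Tendsto f (cocompact Γ) (nhds 0) := f.zero_at_infty'
  have hmem : {x : Γ | ‖f x‖ < r / 2} ∈ cocompact Γ := by
    have hball : Metric.ball (0 : ℂ) (r / 2) ∈ nhds (0 : ℂ) :=
      Metric.ball_mem_nhds 0 (by linarith)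
    have h2 := htend hball
    rw [Filter.mem_map] at h2
    convert h2 using 1
    ext x
    simp [Metric.mem_ball, dist_eq_norm]
  rw [mem_cocompact] at hmem
  obtain ⟨K, hKc, hKsub⟩ := hmem
  have hKfin : K.Finite := hKc.finite_of_discrete
  have hKne : K.Nonempty := by
    by_contra hne
    rw [Set.not_nonempty_iff_eq_empty] at hne
    have hall : ∀ x, ‖f x‖ ≤ r / 2 := by
      intro x
      have : x ∈ Kᶜ := by rw [hne]; simp
      exact le_of_lt (hKsub this)
    have := norm_le_of f (by linarith) hall
    linarith
  obtain ⟨k, hk, hkmax⟩ := Set.exists_max_image K (fun x => ‖f x‖) hKfin hKne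
  refine ⟨k, le_antisymm (coord_le_norm f k) ?_⟩
  have hle : ∀ x, ‖f x‖ ≤ max ‖f k‖ (r / 2) := by
    intro x
    by_cases hx : x ∈ K
    · exact le_max_of_le_left (hkmax x hx)
    · exact le_max_of_le_right (le_of_lt (hKsub hx))
  have := norm_le_of f (le_max_of_le_right (by linarith)) hle
  rcases le_max_iff.1 this with h | h
  · exact h
  · linarith

/-- `bas k μ = μ • e_k`. -/
noncomputable def bas (k : Γ) (μ : ℂ) : C₀(Γ, ℂ) := μ • stdBasis k

lemma stdBasis_apply (n i : Γ) : stdBasis n i = if i = n then (1:ℂ) else 0 := rfl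

lemma bas_apply (k : Γ) (μ : ℂ) (i : Γ) : bas k μ i = if i = k then μ else 0 := by
  simp only [bas, ZeroAtInftyContinuousMap.smul_apply, stdBasis_apply, smul_eq_mul]
  split <;> simp

lemma norm_bas (k : Γ) (μ : ℂ) : ‖bas k μ‖ = ‖μ‖ := by
  refine le_antisymm (norm_le_of _ (norm_nonneg μ) fun i => ?_) ?_
  · rw [bas_apply]; split <;> simp
  · have := coord_le_norm (bas k μ) k
    rwa [bas_apply, if_pos rfl] at this

lemma norm_bas_one (k : Γ) {μ : ℂ} (hμ : ‖μ‖ = 1) : ‖bas k μ‖ = 1 := by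
  rw [norm_bas, hμ]

/-- norm of a two-coordinate element with unimodular coordinates. -/
lemma norm_bas_pair (k j : Γ) (hkj : j ≠ k) {a b : ℂ} (ha : ‖a‖ = 1) (hb : ‖b‖ ≤ 1) :
    ‖bas k a + bas j b‖ = 1 := by
  refine le_antisymm (norm_le_of _ zero_le_one fun i => ?_) ?_
  · rw [ZeroAtInftyContinuousMap.add_apply, bas_apply, bas_apply]
    rcases eq_or_ne i k with h | h
    · rw [if_pos h, if_neg (by rw [h]; exact fun hh => hkj hh.symm), add_zero, ha]
    · rw [if_neg h, zero_add]
      split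
      · exact hb
      · simp
  · have := coord_le_norm (bas k a + bas j b) k
    rwa [ZeroAtInftyContinuousMap.add_apply, bas_apply, bas_apply, if_pos rfl,
      if_neg (fun hh => hkj hh.symm), add_zero, ha] at this

section Delta

variable {X : Type*} [NormedAddCommGroup X] [NormedSpace ℂ X]
variable (Δ : sphere (0 : C₀(Γ, ℂ)) 1 → sphere (0 : X) 1)

/-- The isometry, as a map on norm-one elements. -/
noncomputable def DD (f : C₀(Γ, ℂ)) (hf : ‖f‖ = 1) : X :=
  (Δ ⟨f, by rw [mem_sphere_iff_norm, sub_zero]; exact hf⟩ : X)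

lemma norm_DD (f : C₀(Γ, ℂ)) (hf : ‖f‖ = 1) : ‖DD Δ f hf‖ = 1 := by
  have h := (Δ ⟨f, by rw [mem_sphere_iff_norm, sub_zero]; exact hf⟩).2
  rw [mem_sphere_iff_norm, sub_zero] at h
  exact h

lemma DD_congr {f g : C₀(Γ, ℂ)} (h : f = g) (hf : ‖f‖ = 1) (hg : ‖g‖ = 1) :
    DD Δ f hf = DD Δ g hg := by subst h; rfl

lemma dist_DD (hiso : Isometry Δ) {f g : C₀(Γ, ℂ)} (hf : ‖f‖ = 1) (hg : ‖g‖ = 1) :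
    ‖DD Δ f hf - DD Δ g hg‖ = ‖f - g‖ := by
  have h := hiso.dist_eq ⟨f, by rw [mem_sphere_iff_norm, sub_zero]; exact hf⟩
    ⟨g, by rw [mem_sphere_iff_norm, sub_zero]; exact hg⟩
  rw [Subtype.dist_eq, Subtype.dist_eq, dist_eq_norm, dist_eq_norm] at h
  exact h

lemma surj_DD (hsurj : Function.Surjective Δ) (p : X) (hp : ‖p‖ = 1) : ∃ (f : C₀(Γ, ℂ)) (hf : ‖f‖ = 1), DD Δ f hf = p := by
  obtain ⟨a, ha⟩ := hsurj ⟨p, by rw [mem_sphere_iff_norm, sub_zero]; exact hp⟩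
  have ha1 : ‖(a : C₀(Γ, ℂ))‖ = 1 := by
    have := a.2; rwa [mem_sphere_iff_norm, sub_zero] at this
  refine ⟨a, ha1, ?_⟩
  have : (⟨(a : C₀(Γ, ℂ)), by rw [mem_sphere_iff_norm, sub_zero]; exact ha1⟩ :
      sphere (0 : C₀(Γ, ℂ)) 1) = a := Subtype.ext rfl
  rw [DD, this, ha]

end Delta

lemma bas_neg (j : Γ) (b : ℂ) : bas j (-b) = - (bas j b) :=
  neg_smul b (stdBasis j)

lemma norm_bas_sub_bas (k j : Γ) (hkj : j ≠ k) {a b : ℂ} (ha : ‖a‖ = 1) (hb : ‖b‖ ≤ 1) :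
    ‖bas k a - bas j b‖ = 1 := by
  rw [sub_eq_add_neg, ← bas_neg]
  exact norm_bas_pair k j hkj ha (by rwa [norm_neg])

section Delta2

variable {X : Type*} [NormedAddCommGroup X] [NormedSpace ℂ X]
variable (Δ : sphere (0 : C₀(Γ, ℂ)) 1 → sphere (0 : X) 1)

lemma norm_conj_smul_sub {α : ℂ} (hα : ‖α‖ = 1) (p q : X) :
    ‖(starRingEnd ℂ) α • p - q‖ = ‖p - α • q‖ := by
  have h1 : α * (starRingEnd ℂ) α = 1 := by
    rw [Complex.mul_conj]; norm_cast; exact normSq_one_of_norm_one hα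
  calc ‖(starRingEnd ℂ) α • p - q‖ = ‖α • ((starRingEnd ℂ) α • p - q)‖ := by
        rw [norm_smul, hα, one_mul]
  _ = ‖p - α • q‖ := by rw [smul_sub, smul_smul, h1, one_smul]

lemma stepA (hiso : Isometry Δ) (k : Γ) {μ : ℂ} (hμ : ‖μ‖ = 1)
    {w : C₀(Γ, ℂ)} (hw : ‖w‖ = 1)
    (hDw : DD Δ w hw = - DD Δ (bas k μ) (norm_bas_one k hμ)) : w k = -μ := by
  have hdist : ‖w - bas k μ‖ = 2 := by
    rw [← dist_DD Δ hiso hw (norm_bas_one k hμ), hDw]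
    have he : -DD Δ (bas k μ) (norm_bas_one k hμ) - DD Δ (bas k μ) (norm_bas_one k hμ)
        = (-2 : ℝ) • DD Δ (bas k μ) (norm_bas_one k hμ) := by
      rw [neg_smul, two_smul ℝ]; abel
    rw [he, norm_smul, norm_DD]
    norm_num
  obtain ⟨i, hi⟩ := exists_attain (w - bas k μ) (by rw [hdist]; norm_num)
  rw [hdist] at hi
  rcases eq_or_ne i k with rfl | hik
  · rw [ZeroAtInftyContinuousMap.sub_apply, bas_apply, if_pos rfl] at hi
    have h1 : ‖w i‖ ≤ 1 := (coord_le_norm w i).trans (le_of_eq hw)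
    have h2 := diam_two h1 (le_of_eq hμ) hi
    rw [h2.1, neg_neg]
  · rw [ZeroAtInftyContinuousMap.sub_apply, bas_apply, if_neg hik, sub_zero] at hi
    have := coord_le_norm w i
    rw [hw, hi] at this
    linarith

lemma antipode (hiso : Isometry Δ) (hsurj : Function.Surjective Δ) (k : Γ) {μ : ℂ}
    (hμ : ‖μ‖ = 1) :
    DD Δ (bas k (-μ)) (norm_bas_one k (by rw [norm_neg]; exact hμ)) =
      - DD Δ (bas k μ) (norm_bas_one k hμ) := by
  obtain ⟨w, hw, hDw⟩ := surj_DD Δ hsurj (- DD Δ (bas k μ) (norm_bas_one k hμ))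
    (by rw [norm_neg, norm_DD])
  have hwk : w k = -μ := stepA Δ hiso k hμ hw hDw
  suffices hweq : w = bas k (-μ) by
    rw [← DD_congr Δ hweq hw (norm_bas_one k (by rw [norm_neg]; exact hμ)), hDw]
  set w' := w - bas k (-μ) with hw'def
  have hw'k : w' k = 0 := by
    rw [hw'def, ZeroAtInftyContinuousMap.sub_apply, bas_apply, if_pos rfl, hwk, sub_self]
  have hw'i : ∀ i, i ≠ k → w' i = w i := by
    intro i hik
    rw [hw'def, ZeroAtInftyContinuousMap.sub_apply, bas_apply, if_neg hik, sub_zero]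
  set t := ‖w'‖ with htdef
  have ht1 : t ≤ 1 := by
    refine norm_le_of _ zero_le_one fun i => ?_
    rcases eq_or_ne i k with rfl | hik
    · rw [hw'k]; simp
    · rw [hw'i i hik]; exact (coord_le_norm w i).trans (le_of_eq hw)
  rcases eq_or_ne t 0 with ht0 | ht0
  · exact sub_eq_zero.1 (by rwa [← norm_eq_zero])
  exfalso
  obtain ⟨j, hj⟩ := exists_attain w' ht0
  have hjk : j ≠ k := by
    intro hh; rw [hh, hw'k] at hj; simp at hj; exact ht0 hj.symm
  have htpos : 0 < t := lt_of_le_of_ne (norm_nonneg w') (Ne.symm ht0)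
  have hc : ‖w j‖ = t := by rw [← hw'i j hjk]; exact hj
  set c := w j with hcdef
  rcases eq_or_ne t 1 with ht1' | htlt
  -- case t = 1 : a second unimodular coordinate, contradiction via step A at j
  · have hc1 : ‖c‖ = 1 := by rw [hc, ht1']
    obtain ⟨w2, hw2, hDw2⟩ := surj_DD Δ hsurj (- DD Δ (bas j c) (norm_bas_one j hc1))
      (by rw [norm_neg, norm_DD])
    have hw2j : w2 j = -c := stepA Δ hiso j hc1 hw2 hDw2
    have hdist : ‖w - w2‖ = 1 := by
      rw [← dist_DD Δ hiso hw hw2, hDw, hDw2]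
      rw [show -DD Δ (bas k μ) (norm_bas_one k hμ) - -DD Δ (bas j c) (norm_bas_one j hc1)
        = -(DD Δ (bas k μ) (norm_bas_one k hμ) - DD Δ (bas j c) (norm_bas_one j hc1)) by abel]
      rw [norm_neg, dist_DD Δ hiso]
      exact norm_bas_sub_bas k j hjk hμ (le_of_eq hc1)
    have hcoord := coord_le_norm (w - w2) j
    rw [hdist, ZeroAtInftyContinuousMap.sub_apply, hw2j, ← hcdef] at hcoord
    rw [show c - -c = (2:ℂ) * c by ring, norm_mul, hc1] at hcoord
    norm_num at hcoord
  -- case 0 < t < 1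
  · have htlt1 : t < 1 := lt_of_le_of_ne ht1 htlt
    set ζ : ℂ := ((t : ℂ))⁻¹ * c with hζdef
    have htC : ((t : ℂ)) ≠ 0 := by
      simp only [ne_eq, Complex.ofReal_eq_zero]; exact ht0
    have hζ : ‖ζ‖ = 1 := by
      rw [hζdef, norm_mul, norm_inv, Complex.norm_real, Real.norm_eq_abs,
        abs_of_pos htpos, hc]
      field_simp
    have hcζ : c = (t : ℂ) * ζ := by
      rw [hζdef, ← mul_assoc, mul_inv_cancel₀ htC, one_mul]
    have hsub : ‖c - ζ‖ = 1 - t := by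
      rw [hcζ, show (t:ℂ) * ζ - ζ = ((t:ℂ) - 1) * ζ by ring, norm_mul, hζ, mul_one]
      rw [show (t:ℂ) - 1 = ((t - 1 : ℝ) : ℂ) by push_cast; ring, Complex.norm_real,
        Real.norm_eq_abs, _root_.abs_of_nonpos (show t - 1 ≤ (0:ℝ) by linarith)]
      ring
    have hadd : ‖c + ζ‖ = 1 + t := by
      rw [hcζ, show (t:ℂ) * ζ + ζ = ((t:ℂ) + 1) * ζ by ring, norm_mul, hζ, mul_one]
      rw [show (t:ℂ) + 1 = ((t + 1 : ℝ) : ℂ) by push_cast; ring, Complex.norm_real,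
        Real.norm_eq_abs, _root_.abs_of_nonneg (show (0:ℝ) ≤ t + 1 by linarith)]
      ring
    set x := bas k (-μ) + bas j ζ with hxdef
    set y := bas k (-μ) + bas j (-ζ) with hydef
    have hμ' : ‖-μ‖ = 1 := by rwa [norm_neg]
    have hx : ‖x‖ = 1 := norm_bas_pair k j hjk hμ' (le_of_eq hζ)
    have hy : ‖y‖ = 1 := norm_bas_pair k j hjk hμ' (by rw [norm_neg]; exact le_of_eq hζ)
    have hxco : ∀ i, x i = if i = k then -μ else if i = j then ζ else 0 := by
      intro i
      rw [hxdef, ZeroAtInftyContinuousMap.add_apply, bas_apply, bas_apply]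
      rcases eq_or_ne i k with rfl | hik
      · rw [if_pos rfl, if_pos rfl, if_neg (fun hh => hjk hh.symm), add_zero]
      · rw [if_neg hik, if_neg hik, zero_add]
    have hyco : ∀ i, y i = if i = k then -μ else if i = j then -ζ else 0 := by
      intro i
      rw [hydef, ZeroAtInftyContinuousMap.add_apply, bas_apply, bas_apply]
      rcases eq_or_ne i k with rfl | hik
      · rw [if_pos rfl, if_pos rfl, if_neg (fun hh => hjk hh.symm), add_zero]
      · rw [if_neg hik, if_neg hik, zero_add]
    -- r = ‖w - x‖ < 1
    set r := ‖w - x‖ with hrdef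
    have hwxco : ∀ i, (w - x) i = if i = k then 0 else if i = j then c - ζ else w i := by
      intro i
      rw [ZeroAtInftyContinuousMap.sub_apply, hxco]
      rcases eq_or_ne i k with rfl | hik
      · rw [if_pos rfl, if_pos rfl, hwk, sub_self]
      · rcases eq_or_ne i j with rfl | hij
        · rw [if_neg hik, if_neg hik, if_pos rfl, if_pos rfl, ← hcdef]
        · rw [if_neg hik, if_neg hik, if_neg hij, if_neg hij, sub_zero]
    have hr_le : r ≤ max (1 - t) t := by
      refine norm_le_of _ (le_max_of_le_right (le_of_lt htpos)) fun i => ?_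
      rw [hwxco]
      rcases eq_or_ne i k with rfl | hik
      · rw [if_pos rfl]; simp [le_max_iff]; left; linarith
      · rcases eq_or_ne i j with rfl | hij
        · rw [if_neg hik, if_pos rfl, hsub]; exact le_max_left _ _
        · rw [if_neg hik, if_neg hij]
          refine le_max_of_le_right ?_
          rw [← hw'i i hik]
          exact coord_le_norm w' i
    have hrlt1 : r < 1 := lt_of_le_of_lt hr_le (by rw [max_lt_iff]; constructor <;> linarith)
    -- ‖w - y‖ = 1 + t
    have hwyco : ∀ i, (w - y) i = if i = k then 0 else if i = j then c + ζ else w i := by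
      intro i
      rw [ZeroAtInftyContinuousMap.sub_apply, hyco]
      rcases eq_or_ne i k with rfl | hik
      · rw [if_pos rfl, if_pos rfl, hwk, sub_self]
      · rcases eq_or_ne i j with rfl | hij
        · rw [if_neg hik, if_neg hik, if_pos rfl, if_pos rfl, ← hcdef, sub_neg_eq_add]
        · rw [if_neg hik, if_neg hik, if_neg hij, if_neg hij, sub_zero]
    have hwy : ‖w - y‖ = 1 + t := by
      refine le_antisymm (norm_le_of _ (by linarith) fun i => ?_) ?_
      · rw [hwyco]
        rcases eq_or_ne i k with rfl | hik
        · rw [if_pos rfl]; simp; linarith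
        · rcases eq_or_ne i j with rfl | hij
          · rw [if_neg hik, if_pos rfl, hadd]
          · rw [if_neg hik, if_neg hij]
            have := (coord_le_norm w i).trans (le_of_eq hw)
            linarith
      · have := coord_le_norm (w - y) j
        rw [hwyco j, if_neg hjk, if_pos rfl, hadd] at this
        exact this
    -- preimages of the antipodes of x and y
    obtain ⟨xs, hxs, hDxs⟩ := surj_DD Δ hsurj (- DD Δ x hx) (by rw [norm_neg, norm_DD])
    obtain ⟨ys, hys, hDys⟩ := surj_DD Δ hsurj (- DD Δ y hy) (by rw [norm_neg, norm_DD])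
    -- ‖xs - bas k μ‖ = r
    have keyx : ‖xs - bas k μ‖ = r := by
      rw [← dist_DD Δ hiso hxs (norm_bas_one k hμ), hDxs]
      have hμD : DD Δ (bas k μ) (norm_bas_one k hμ) = - DD Δ w hw := by rw [hDw]; abel
      rw [hμD, show -DD Δ x hx - -DD Δ w hw = DD Δ w hw - DD Δ x hx by abel,
        dist_DD Δ hiso, hrdef]
    have hxsk : ‖xs k - μ‖ ≤ r := by
      have := coord_le_norm (xs - bas k μ) k
      rwa [keyx, ZeroAtInftyContinuousMap.sub_apply, bas_apply, if_pos rfl] at this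
    have hxsi : ∀ i, i ≠ k → ‖xs i‖ ≤ r := by
      intro i hik
      have := coord_le_norm (xs - bas k μ) i
      rwa [keyx, ZeroAtInftyContinuousMap.sub_apply, bas_apply, if_neg hik, sub_zero] at this
    -- ‖ys - bas k μ‖ = 1 + t, attained at k
    have keyy : ‖ys - bas k μ‖ = 1 + t := by
      rw [← dist_DD Δ hiso hys (norm_bas_one k hμ), hDys]
      have hμD : DD Δ (bas k μ) (norm_bas_one k hμ) = - DD Δ w hw := by rw [hDw]; abel
      rw [hμD, show -DD Δ y hy - -DD Δ w hw = DD Δ w hw - DD Δ y hy by abel,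
        dist_DD Δ hiso, hwy]
    have hysk : ‖ys k - μ‖ = 1 + t := by
      obtain ⟨i, hi⟩ := exists_attain (ys - bas k μ) (by rw [keyy]; positivity)
      rw [keyy] at hi
      rcases eq_or_ne i k with rfl | hik
      · rwa [ZeroAtInftyContinuousMap.sub_apply, bas_apply, if_pos rfl] at hi
      · exfalso
        rw [ZeroAtInftyContinuousMap.sub_apply, bas_apply, if_neg hik, sub_zero] at hi
        have := (coord_le_norm ys i).trans (le_of_eq hys)
        rw [hi] at this
        linarith
    -- ‖xs - x‖ = 2, attained at k, giving xs k = μ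
    have hxx : ‖xs - x‖ = 2 := by
      rw [← dist_DD Δ hiso hxs hx, hDxs]
      rw [show -DD Δ x hx - DD Δ x hx = (-2 : ℝ) • DD Δ x hx by
        rw [neg_smul, two_smul ℝ]; abel]
      rw [norm_smul, norm_DD]
      norm_num
    have hxskμ : xs k = μ := by
      obtain ⟨i, hi⟩ := exists_attain (xs - x) (by rw [hxx]; norm_num)
      rw [hxx] at hi
      rcases eq_or_ne i k with rfl | hik
      · rw [ZeroAtInftyContinuousMap.sub_apply, hxco, if_pos rfl, sub_neg_eq_add] at hi
        have h1 : ‖xs i‖ ≤ 1 := (coord_le_norm xs i).trans (le_of_eq hxs)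
        have h2 := diam_two h1 (le_of_eq (by rw [norm_neg, hμ]) : ‖-μ‖ ≤ 1)
          (by rwa [sub_neg_eq_add] : ‖xs i - -μ‖ = 2)
        exact (neg_inj.mp h2.1).symm
      · exfalso
        rw [ZeroAtInftyContinuousMap.sub_apply, hxco, if_neg hik] at hi
        have hxi := hxsi i hik
        rcases eq_or_ne i j with rfl | hij
        · rw [if_pos rfl] at hi
          have := norm_sub_le (xs i) ζ
          rw [hi, hζ] at this
          linarith
        · rw [if_neg hij, sub_zero] at hi
          rw [hi] at hxi
          linarith
    -- ‖xs - ys‖ = 2, attained at k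
    have hxy : ‖xs - ys‖ = 2 := by
      rw [← dist_DD Δ hiso hxs hys, hDxs, hDys]
      rw [show -DD Δ x hx - -DD Δ y hy = DD Δ y hy - DD Δ x hx by abel, dist_DD Δ hiso]
      have hyx : y - x = bas j ((-2 : ℂ) * ζ) := by
        rw [hydef, hxdef]
        have : bas j (-ζ) - bas j ζ = bas j ((-2:ℂ) * ζ) := by
          simp only [bas]
          module
        rw [show bas k (-μ) + bas j (-ζ) - (bas k (-μ) + bas j ζ)
          = bas j (-ζ) - bas j ζ by abel, this]
      rw [hyx, norm_bas, norm_mul, hζ]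
      norm_num
    obtain ⟨i, hi⟩ := exists_attain (xs - ys) (by rw [hxy]; norm_num)
    rw [hxy] at hi
    rcases eq_or_ne i k with rfl | hik
    · rw [ZeroAtInftyContinuousMap.sub_apply, hxskμ] at hi
      -- ‖μ - ys k‖ = 2 but ‖ys k - μ‖ = 1 + t < 2
      rw [norm_sub_rev] at hi
      rw [hysk] at hi
      linarith
    · rw [ZeroAtInftyContinuousMap.sub_apply] at hi
      have h1 := hxsi i hik
      have h2 := (coord_le_norm ys i).trans (le_of_eq hys)
      have := norm_sub_le (xs i) (ys i)
      rw [hi] at this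
      linarith

end Delta2

section Delta3

variable {X : Type*} [NormedAddCommGroup X] [NormedSpace ℂ X]
variable (Δ : sphere (0 : C₀(Γ, ℂ)) 1 → sphere (0 : X) 1)

/-- Step C : support functional bound. -/
lemma support_bound (hiso : Isometry Δ) (hsurj : Function.Surjective Δ) (k : Γ) {μ : ℂ}
    (hμ : ‖μ‖ = 1) (φ : X →L[ℂ] ℂ) (hφn : ‖φ‖ ≤ 1)
    (hφ1 : φ (DD Δ (bas k μ) (norm_bas_one k hμ)) = 1)
    (z : C₀(Γ, ℂ)) (hz : ‖z‖ = 1) :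
    ‖φ (DD Δ z hz)‖ ≤ ‖z k‖ := by
  rcases le_or_gt 1 ‖z k‖ with h | h
  · calc ‖φ (DD Δ z hz)‖ ≤ ‖φ‖ * ‖DD Δ z hz‖ := φ.le_opNorm _
    _ ≤ 1 := by rw [norm_DD, mul_one]; exact hφn
    _ ≤ ‖z k‖ := h
  · set z' := z - bas k (z k) with hz'def
    have hz'co : ∀ i, z' i = if i = k then 0 else z i := by
      intro i
      rw [hz'def, ZeroAtInftyContinuousMap.sub_apply, bas_apply]
      rcases eq_or_ne i k with rfl | hik
      · rw [if_pos rfl, if_pos rfl, sub_self]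
      · rw [if_neg hik, if_neg hik, sub_zero]
    have hz'1 : ‖z'‖ = 1 := by
      refine le_antisymm (norm_le_of _ zero_le_one fun i => ?_) ?_
      · rw [hz'co]
        rcases eq_or_ne i k with rfl | hik
        · rw [if_pos rfl]; simp
        · rw [if_neg hik]; exact (coord_le_norm z i).trans (le_of_eq hz)
      · by_contra hlt
        push_neg at hlt
        have : ∀ i, ‖z i‖ ≤ max ‖z k‖ ‖z'‖ := by
          intro i
          rcases eq_or_ne i k with rfl | hik
          · exact le_max_left _ _
          · refine le_max_of_le_right ?_
            have := coord_le_norm z' i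
            rwa [hz'co, if_neg hik] at this
        have h2 := norm_le_of z (le_max_of_le_left (norm_nonneg _)) this
        rw [hz] at h2
        rcases le_max_iff.1 h2 with h3 | h3 <;> linarith
    -- φ vanishes on DD z'
    have hφz' : φ (DD Δ z' hz'1) = 0 := by
      have hd1 : ‖z' - bas k μ‖ ≤ 1 := by
        refine norm_le_of _ zero_le_one fun i => ?_
        rw [ZeroAtInftyContinuousMap.sub_apply, hz'co, bas_apply]
        rcases eq_or_ne i k with rfl | hik
        · rw [if_pos rfl, if_pos rfl, zero_sub, norm_neg, hμ]
        · rw [if_neg hik, if_neg hik, sub_zero]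
          exact (coord_le_norm z i).trans (le_of_eq hz)
      have hd2 : ‖z' - bas k (-μ)‖ ≤ 1 := by
        refine norm_le_of _ zero_le_one fun i => ?_
        rw [ZeroAtInftyContinuousMap.sub_apply, hz'co, bas_apply]
        rcases eq_or_ne i k with rfl | hik
        · rw [if_pos rfl, if_pos rfl, zero_sub, norm_neg, norm_neg, hμ]
        · rw [if_neg hik, if_neg hik, sub_zero]
          exact (coord_le_norm z i).trans (le_of_eq hz)
      have hb1 : ‖φ (DD Δ z' hz'1) - 1‖ ≤ 1 := by
        rw [← hφ1, ← map_sub]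
        calc ‖φ (DD Δ z' hz'1 - DD Δ (bas k μ) (norm_bas_one k hμ))‖
            ≤ ‖φ‖ * ‖DD Δ z' hz'1 - DD Δ (bas k μ) (norm_bas_one k hμ)‖ := φ.le_opNorm _
        _ ≤ ‖DD Δ z' hz'1 - DD Δ (bas k μ) (norm_bas_one k hμ)‖ := by
            apply mul_le_of_le_one_left (norm_nonneg _) hφn
        _ = ‖z' - bas k μ‖ := dist_DD Δ hiso _ _
        _ ≤ 1 := hd1
      have hφneg : φ (DD Δ (bas k (-μ)) (norm_bas_one k (by rw [norm_neg]; exact hμ))) =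
          -1 := by
        rw [antipode Δ hiso hsurj k hμ, map_neg, hφ1]
      have hb2 : ‖φ (DD Δ z' hz'1) + 1‖ ≤ 1 := by
        rw [show (1:ℂ) = -(-1) by ring, ← hφneg, ← sub_eq_add_neg, ← map_sub]
        calc ‖φ (DD Δ z' hz'1 - DD Δ (bas k (-μ)) (norm_bas_one k (by rw [norm_neg]; exact hμ)))‖
            ≤ ‖φ‖ * ‖DD Δ z' hz'1 - DD Δ (bas k (-μ)) (norm_bas_one k (by rw [norm_neg]; exact hμ))‖ :=
              φ.le_opNorm _
        _ ≤ ‖DD Δ z' hz'1 - DD Δ (bas k (-μ)) (norm_bas_one k (by rw [norm_neg]; exact hμ))‖ := by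
            apply mul_le_of_le_one_left (norm_nonneg _) hφn
        _ = ‖z' - bas k (-μ)‖ := dist_DD Δ hiso _ _
        _ ≤ 1 := hd2
      exact near_both hb1 hb2
    calc ‖φ (DD Δ z hz)‖ = ‖φ (DD Δ z hz) - φ (DD Δ z' hz'1)‖ := by rw [hφz', sub_zero]
    _ = ‖φ (DD Δ z hz - DD Δ z' hz'1)‖ := by rw [map_sub]
    _ ≤ ‖φ‖ * ‖DD Δ z hz - DD Δ z' hz'1‖ := φ.le_opNorm _
    _ ≤ ‖DD Δ z hz - DD Δ z' hz'1‖ := mul_le_of_le_one_left (norm_nonneg _) hφn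
    _ = ‖z - z'‖ := dist_DD Δ hiso _ _
    _ = ‖z k‖ := by
        rw [show z - z' = bas k (z k) by rw [hz'def]; abel, norm_bas]

/-- Step D : structure of preimages of rotations of basis vectors. -/
lemma rot_structure (hiso : Isometry Δ) (hsurj : Function.Surjective Δ) (k : Γ) {μ α : ℂ}
    (hμ : ‖μ‖ = 1) (hα : ‖α‖ = 1) {z : C₀(Γ, ℂ)} (hz : ‖z‖ = 1)
    (hDz : DD Δ z hz = α • DD Δ (bas k μ) (norm_bas_one k hμ)) :
    (z k = α * μ ∨ z k = (starRingEnd ℂ) α * μ) ∧ ∀ i, i ≠ k → ‖z i‖ ≤ ‖α - 1‖ := by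
  set p := DD Δ (bas k μ) (norm_bas_one k hμ) with hpdef
  have hp1 : ‖p‖ = 1 := norm_DD Δ _ _
  have hp0 : p ≠ 0 := by intro h; rw [h, norm_zero] at hp1; norm_num at hp1
  obtain ⟨φ, hφn, hφp⟩ := exists_dual_vector ℂ p (norm_ne_zero_iff.mpr hp0)
  have hφp1 : φ p = 1 := by rw [hφp, hp1]; norm_num
  have hzk1 : ‖z k‖ = 1 := by
    refine le_antisymm ((coord_le_norm z k).trans (le_of_eq hz)) ?_
    have := support_bound Δ hiso hsurj k hμ φ (le_of_eq hφn) hφp1 z hz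
    rw [hDz, map_smul, smul_eq_mul, hφp1, mul_one, hα] at this
    exact this
  have d1 : ‖z - bas k μ‖ = ‖α - 1‖ := by
    rw [← dist_DD Δ hiso hz (norm_bas_one k hμ), hDz, ← hpdef]
    rw [show α • p - p = (α - 1) • p by rw [sub_smul, one_smul]]
    rw [norm_smul, hp1, mul_one]
  have d2 : ‖z - bas k (-μ)‖ = ‖α + 1‖ := by
    rw [← dist_DD Δ hiso hz (norm_bas_one k (by rw [norm_neg]; exact hμ)),
      antipode Δ hiso hsurj k hμ, hDz, ← hpdef]
    rw [show α • p - -p = (α + 1) • p by rw [add_smul, one_smul, sub_neg_eq_add]]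
    rw [norm_smul, hp1, mul_one]
  constructor
  · have h1 : ‖z k - μ‖ ≤ ‖α - 1‖ := by
      have := coord_le_norm (z - bas k μ) k
      rwa [d1, ZeroAtInftyContinuousMap.sub_apply, bas_apply, if_pos rfl] at this
    have h2 : ‖z k + μ‖ ≤ ‖α + 1‖ := by
      have := coord_le_norm (z - bas k (-μ)) k
      rwa [d2, ZeroAtInftyContinuousMap.sub_apply, bas_apply, if_pos rfl, sub_neg_eq_add]
        at this
    exact disk_lemma hzk1 hα hμ h1 h2
  · intro i hik
    have := coord_le_norm (z - bas k μ) i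
    rwa [d1, ZeroAtInftyContinuousMap.sub_apply, bas_apply, if_neg hik, sub_zero] at this

end Delta3

lemma parallelogram_contra {a m : ℂ} {t : ℝ} (ha : ‖a‖ = 1) (hm : ‖m‖ = 1)
    (hplus : ‖a + m‖ = 1 + t) (hminus : ‖a - m‖ ≤ 1 - t) (ht : 0 < t) (th : t ≤ 1/2) :
    False := by
  have hpar : Complex.normSq (a - m) + Complex.normSq (a + m)
      = 2 * Complex.normSq a + 2 * Complex.normSq m := by
    rw [Complex.normSq_sub, Complex.normSq_add]; ring
  have h1 := normSq_one_of_norm_one ha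
  have h2 := normSq_one_of_norm_one hm
  have e1 : Complex.normSq (a + m) = (1 + t)^2 := by
    have := norm_sq_eq_normSq (a + m); rw [hplus] at this; nlinarith
  have e2 : Complex.normSq (a - m) ≤ (1 - t)^2 := by
    have h3 := norm_sq_eq_normSq (a - m)
    nlinarith [norm_nonneg (a - m)]
  nlinarith

section Delta4

variable {X : Type*} [NormedAddCommGroup X] [NormedSpace ℂ X]
variable (Δ : sphere (0 : C₀(Γ, ℂ)) 1 → sphere (0 : X) 1)

/-- Step E : small rotations of basis vectors map to basis vectors. -/
lemma small_rot (hiso : Isometry Δ) (hsurj : Function.Surjective Δ) {α : ℂ} (hα : ‖α‖ = 1)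
    (hsmall : ‖α - 1‖ ≤ 1/2) (k : Γ) (μ : ℂ) (hμ : ‖μ‖ = 1) :
    ∃ (γ : ℂ) (hγ : ‖γ‖ = 1),
      α • DD Δ (bas k μ) (norm_bas_one k hμ) = DD Δ (bas k γ) (norm_bas_one k hγ) := by
  set p := DD Δ (bas k μ) (norm_bas_one k hμ) with hpdef
  have hp1 : ‖p‖ = 1 := norm_DD Δ _ _
  obtain ⟨z, hz, hDz⟩ := surj_DD Δ hsurj (α • p) (by rw [norm_smul, hα, hp1, one_mul])
  obtain ⟨hγcase, htail⟩ := rot_structure Δ hiso hsurj k hμ hα hz hDz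
  set γ := z k with hγdef
  have hγ1 : ‖γ‖ = 1 := by
    rcases hγcase with h | h <;> rw [h, norm_mul, hμ, mul_one]
    · exact hα
    · rw [RCLike.norm_conj]; exact hα
  refine ⟨γ, hγ1, ?_⟩
  suffices hzeq : z = bas k γ by
    rw [← hDz, DD_congr Δ hzeq hz (norm_bas_one k hγ1)]
  -- tail of z
  set z' := z - bas k γ with hz'def
  have hz'co : ∀ i, z' i = if i = k then 0 else z i := by
    intro i
    rw [hz'def, ZeroAtInftyContinuousMap.sub_apply, bas_apply]
    rcases eq_or_ne i k with rfl | hik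
    · rw [if_pos rfl, if_pos rfl, hγdef, sub_self]
    · rw [if_neg hik, if_neg hik, sub_zero]
  set t := ‖z'‖ with htdef
  have hthalf : t ≤ 1/2 := by
    refine norm_le_of _ (by norm_num) fun i => ?_
    rw [hz'co]
    rcases eq_or_ne i k with rfl | hik
    · rw [if_pos rfl]; simp
    · rw [if_neg hik]; exact (htail i hik).trans hsmall
  rcases eq_or_ne t 0 with ht0 | ht0
  · exact sub_eq_zero.1 (by rwa [← norm_eq_zero])
  exfalso
  have htpos : 0 < t := lt_of_le_of_ne (norm_nonneg z') (Ne.symm ht0)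
  obtain ⟨j, hj⟩ := exists_attain z' ht0
  have hjk : j ≠ k := by
    intro hh; rw [hh, hz'co, if_pos rfl] at hj; simp at hj; exact ht0 hj.symm
  have hc : ‖z j‖ = t := by rw [hz'co j, if_neg hjk] at hj; exact hj
  set c := z j with hcdef
  set ζ : ℂ := ((t : ℂ))⁻¹ * c with hζdef
  have htC : ((t : ℂ)) ≠ 0 := by
    simp only [ne_eq, Complex.ofReal_eq_zero]; exact ht0
  have hζ : ‖ζ‖ = 1 := by
    rw [hζdef, norm_mul, norm_inv, Complex.norm_real, Real.norm_eq_abs,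
      abs_of_pos htpos, hc]
    field_simp
  have hcζ : c = (t : ℂ) * ζ := by
    rw [hζdef, ← mul_assoc, mul_inv_cancel₀ htC, one_mul]
  have hsubc : ‖c - ζ‖ = 1 - t := by
    rw [hcζ, show (t:ℂ) * ζ - ζ = ((t:ℂ) - 1) * ζ by ring, norm_mul, hζ, mul_one]
    rw [show (t:ℂ) - 1 = ((t - 1 : ℝ) : ℂ) by push_cast; ring, Complex.norm_real,
      Real.norm_eq_abs, _root_.abs_of_nonpos (show t - 1 ≤ (0:ℝ) by linarith)]
    ring
  have haddc : ‖c + ζ‖ = 1 + t := by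
    rw [hcζ, show (t:ℂ) * ζ + ζ = ((t:ℂ) + 1) * ζ by ring, norm_mul, hζ, mul_one]
    rw [show (t:ℂ) + 1 = ((t + 1 : ℝ) : ℂ) by push_cast; ring, Complex.norm_real,
      Real.norm_eq_abs, _root_.abs_of_nonneg (show (0:ℝ) ≤ t + 1 by linarith)]
    ring
  set x := bas k γ + bas j ζ with hxdef
  set y := bas k γ + bas j (-ζ) with hydef
  have hx : ‖x‖ = 1 := norm_bas_pair k j hjk hγ1 (le_of_eq hζ)
  have hy : ‖y‖ = 1 := norm_bas_pair k j hjk hγ1 (by rw [norm_neg]; exact le_of_eq hζ)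
  have hxco : ∀ i, x i = if i = k then γ else if i = j then ζ else 0 := by
    intro i
    rw [hxdef, ZeroAtInftyContinuousMap.add_apply, bas_apply, bas_apply]
    rcases eq_or_ne i k with rfl | hik
    · rw [if_pos rfl, if_pos rfl, if_neg (fun hh => hjk hh.symm), add_zero]
    · rw [if_neg hik, if_neg hik, zero_add]
  have hyco : ∀ i, y i = if i = k then γ else if i = j then -ζ else 0 := by
    intro i
    rw [hydef, ZeroAtInftyContinuousMap.add_apply, bas_apply, bas_apply]
    rcases eq_or_ne i k with rfl | hik
    · rw [if_pos rfl, if_pos rfl, if_neg (fun hh => hjk hh.symm), add_zero]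
    · rw [if_neg hik, if_neg hik, zero_add]
  -- r = ‖z - x‖ ≤ 1 - t
  set r := ‖z - x‖ with hrdef
  have hzxco : ∀ i, (z - x) i = if i = k then 0 else if i = j then c - ζ else z i := by
    intro i
    rw [ZeroAtInftyContinuousMap.sub_apply, hxco]
    rcases eq_or_ne i k with rfl | hik
    · rw [if_pos rfl, if_pos rfl, hγdef, sub_self]
    · rcases eq_or_ne i j with rfl | hij
      · rw [if_neg hik, if_neg hik, if_pos rfl, if_pos rfl, ← hcdef]
      · rw [if_neg hik, if_neg hik, if_neg hij, if_neg hij, sub_zero]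
  have hr_le : r ≤ 1 - t := by
    refine norm_le_of _ (by linarith) fun i => ?_
    rw [hzxco]
    rcases eq_or_ne i k with rfl | hik
    · rw [if_pos rfl]; simp; linarith
    · rcases eq_or_ne i j with rfl | hij
      · rw [if_neg hik, if_pos rfl, hsubc]
      · rw [if_neg hik, if_neg hij]
        have := coord_le_norm z' i
        rw [hz'co, if_neg hik] at this
        linarith
  have hrlt1 : r < 1 := lt_of_le_of_lt hr_le (by linarith)
  -- ‖z - y‖ = 1 + t
  have hzyco : ∀ i, (z - y) i = if i = k then 0 else if i = j then c + ζ else z i := by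
    intro i
    rw [ZeroAtInftyContinuousMap.sub_apply, hyco]
    rcases eq_or_ne i k with rfl | hik
    · rw [if_pos rfl, if_pos rfl, hγdef, sub_self]
    · rcases eq_or_ne i j with rfl | hij
      · rw [if_neg hik, if_neg hik, if_pos rfl, if_pos rfl, ← hcdef, sub_neg_eq_add]
      · rw [if_neg hik, if_neg hik, if_neg hij, if_neg hij, sub_zero]
  have hzy : ‖z - y‖ = 1 + t := by
    refine le_antisymm (norm_le_of _ (by linarith) fun i => ?_) ?_
    · rw [hzyco]
      rcases eq_or_ne i k with rfl | hik
      · rw [if_pos rfl]; simp; linarith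
      · rcases eq_or_ne i j with rfl | hij
        · rw [if_neg hik, if_pos rfl, haddc]
        · rw [if_neg hik, if_neg hij]
          have := (coord_le_norm z i).trans (le_of_eq hz)
          linarith
    · have := coord_le_norm (z - y) j
      rw [hzyco j, if_neg hjk, if_pos rfl, haddc] at this
      exact this
  -- preimages of conj α rotations
  obtain ⟨xs, hxs, hDxs⟩ := surj_DD Δ hsurj ((starRingEnd ℂ) α • DD Δ x hx)
    (by rw [norm_smul, RCLike.norm_conj, hα, norm_DD, one_mul])
  obtain ⟨ys, hys, hDys⟩ := surj_DD Δ hsurj ((starRingEnd ℂ) α • DD Δ y hy)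
    (by rw [norm_smul, RCLike.norm_conj, hα, norm_DD, one_mul])
  have keyx : ‖xs - bas k μ‖ = r := by
    rw [← dist_DD Δ hiso hxs (norm_bas_one k hμ), hDxs, ← hpdef,
      norm_conj_smul_sub hα, ← hDz, dist_DD Δ hiso hx hz, norm_sub_rev, hrdef]
  have hxsk : ‖xs k - μ‖ ≤ r := by
    have := coord_le_norm (xs - bas k μ) k
    rwa [keyx, ZeroAtInftyContinuousMap.sub_apply, bas_apply, if_pos rfl] at this
  have hxsi : ∀ i, i ≠ k → ‖xs i‖ ≤ r := by
    intro i hik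
    have := coord_le_norm (xs - bas k μ) i
    rwa [keyx, ZeroAtInftyContinuousMap.sub_apply, bas_apply, if_neg hik, sub_zero] at this
  have keyy : ‖ys - bas k μ‖ = 1 + t := by
    rw [← dist_DD Δ hiso hys (norm_bas_one k hμ), hDys, ← hpdef,
      norm_conj_smul_sub hα, ← hDz, dist_DD Δ hiso hy hz, norm_sub_rev, hzy]
  have hysk : ‖ys k - μ‖ = 1 + t := by
    obtain ⟨i, hi⟩ := exists_attain (ys - bas k μ) (by rw [keyy]; positivity)
    rw [keyy] at hi
    rcases eq_or_ne i k with rfl | hik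
    · rwa [ZeroAtInftyContinuousMap.sub_apply, bas_apply, if_pos rfl] at hi
    · exfalso
      rw [ZeroAtInftyContinuousMap.sub_apply, bas_apply, if_neg hik, sub_zero] at hi
      have := (coord_le_norm ys i).trans (le_of_eq hys)
      rw [hi] at this
      linarith
  -- ‖xs - ys‖ = 2, attained at k
  have hxy : ‖xs - ys‖ = 2 := by
    rw [← dist_DD Δ hiso hxs hys, hDxs, hDys, ← smul_sub, norm_smul, RCLike.norm_conj, hα,
      one_mul, dist_DD Δ hiso]
    have hyx : x - y = bas j ((2 : ℂ) * ζ) := by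
      rw [hxdef, hydef]
      rw [show bas k γ + bas j ζ - (bas k γ + bas j (-ζ)) = bas j ζ - bas j (-ζ) by abel]
      simp only [bas]
      module
    rw [hyx, norm_bas, norm_mul, hζ]
    norm_num
  obtain ⟨i, hi⟩ := exists_attain (xs - ys) (by rw [hxy]; norm_num)
  rw [hxy] at hi
  rcases eq_or_ne i k with rfl | hik
  · rw [ZeroAtInftyContinuousMap.sub_apply] at hi
    have h1 : ‖xs i‖ ≤ 1 := (coord_le_norm xs i).trans (le_of_eq hxs)
    have h2 : ‖ys i‖ ≤ 1 := (coord_le_norm ys i).trans (le_of_eq hys)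
    obtain ⟨hneg, hxs1⟩ := diam_two h1 h2 hi
    have hplus : ‖xs i + μ‖ = 1 + t := by
      rw [show xs i + μ = -(ys i - μ) by rw [hneg]; ring, norm_neg, hysk]
    exact parallelogram_contra hxs1 hμ hplus (hxsk.trans hr_le) htpos hthalf
  · rw [ZeroAtInftyContinuousMap.sub_apply] at hi
    have h1 := hxsi i hik
    have h2 := (coord_le_norm ys i).trans (le_of_eq hys)
    have := norm_sub_le (xs i) (ys i)
    rw [hi] at this
    linarith

/-- The property `Q α` : multiplication by `α` maps basis images to basis images. -/
def QQ (α : ℂ) : Prop :=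
  ∀ (k : Γ) (μ : ℂ) (hμ : ‖μ‖ = 1),
    ∃ (γ : ℂ) (hγ : ‖γ‖ = 1),
      α • DD Δ (bas k μ) (norm_bas_one k hμ) = DD Δ (bas k γ) (norm_bas_one k hγ)

lemma QQ_mul {α β : ℂ} (hA : QQ Δ α) (hB : QQ Δ β) : QQ Δ (α * β) := by
  intro k μ hμ
  obtain ⟨γ', hγ', h'⟩ := hB k μ hμ
  obtain ⟨γ, hγ, h⟩ := hA k γ' hγ'
  exact ⟨γ, hγ, by rw [mul_smul, h', h]⟩

lemma QQ_all (hiso : Isometry Δ) (hsurj : Function.Surjective Δ) {α : ℂ} (hα : ‖α‖ = 1) :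
    QQ Δ α := by
  set η := Complex.exp ((α.arg / 16 : ℝ) * Complex.I) with hηdef
  have hη1 : ‖η‖ = 1 := by
    rw [hηdef, Complex.norm_exp_ofReal_mul_I]
  have habsz : ‖((α.arg / 16 : ℝ) : ℂ) * Complex.I‖ = |α.arg| / 16 := by
    rw [norm_mul, Complex.norm_I, mul_one, Complex.norm_real, Real.norm_eq_abs, abs_div]
    norm_num
  have hargpi : |α.arg| ≤ Real.pi := Complex.abs_arg_le_pi α
  have hπ4 : Real.pi ≤ 4 := Real.pi_le_four
  have hηs : ‖η - 1‖ ≤ 1/2 := by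
    rw [hηdef]
    calc ‖Complex.exp ((α.arg / 16 : ℝ) * Complex.I) - 1‖
        ≤ 2 * ‖((α.arg / 16 : ℝ) : ℂ) * Complex.I‖ :=
          Complex.norm_exp_sub_one_le (by rw [habsz]; linarith)
    _ = 2 * (|α.arg| / 16) := by rw [habsz]
    _ ≤ 1/2 := by linarith
  have q1 : QQ Δ η := fun k μ hμ => small_rot Δ hiso hsurj hη1 hηs k μ hμ
  have q2 := QQ_mul Δ q1 q1
  have q4 := QQ_mul Δ q2 q2
  have q8 := QQ_mul Δ q4 q4
  have q16 := QQ_mul Δ q8 q8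
  have hprod : η * η * (η * η) * (η * η * (η * η)) * (η * η * (η * η) * (η * η * (η * η)))
      = α := by
    have hpow : η ^ (16 : ℕ) = Complex.exp ((16 : ℕ) * ((α.arg / 16 : ℝ) * Complex.I)) :=
      (Complex.exp_nat_mul _ 16).symm
    have h16 : ((16 : ℕ) : ℂ) * ((α.arg / 16 : ℝ) * Complex.I) = (α.arg : ℝ) * Complex.I := by
      push_cast
      ring
    have hexp : Complex.exp ((α.arg : ℝ) * Complex.I) = α := by
      have := Complex.norm_mul_exp_arg_mul_I α
      rw [hα] at this
      rwa [Complex.ofReal_one, one_mul] at this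
    calc η * η * (η * η) * (η * η * (η * η)) * (η * η * (η * η) * (η * η * (η * η)))
        = η ^ (16 : ℕ) := by ring
    _ = α := by rw [hpow, h16, hexp]
  rw [← hprod]
  exact q16

end Delta4

end TingleyAux

open TingleyAux in
/-- `Δ(λ eₙ) ∈ {λ Δ(eₙ), conj λ • Δ(eₙ)}` for every unimodular `λ`. -/
theorem image_of_unimodular_multiple {Γ : Type*} [TopologicalSpace Γ] [DiscreteTopology Γ]
    [DecidableEq Γ] [Infinite Γ]
    {X : Type*} [NormedAddCommGroup X] [NormedSpace ℂ X] [CompleteSpace X]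
    (Δ : sphere (0 : C₀(Γ, ℂ)) 1 → sphere (0 : X) 1)
    (hΔiso : Isometry Δ) (hΔsurj : Function.Surjective Δ)
    (n : Γ) (lam : ℂ) (hlam : ‖lam‖ = 1)
    (x y : sphere (0 : C₀(Γ, ℂ)) 1)
    (hx : (x : C₀(Γ, ℂ)) = lam • stdBasis n)
    (hy : (y : C₀(Γ, ℂ)) = stdBasis n) :
    (Δ x : X) = lam • (Δ y : X) ∨ (Δ x : X) = (starRingEnd ℂ) lam • (Δ y : X) := by
  have h1 : ‖(1 : ℂ)‖ = 1 := by norm_num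
  -- identify Δ y and Δ x with `DD` values
  have hYD : (Δ y : X) = DD Δ (bas n 1) (norm_bas_one n h1) := by
    have hyy : y = (⟨bas n 1, by rw [mem_sphere_iff_norm, sub_zero]; exact norm_bas_one n h1⟩ :
        sphere (0 : C₀(Γ, ℂ)) 1) :=
      Subtype.ext (by rw [hy]; exact (one_smul ℂ (stdBasis n)).symm)
    rw [hyy]; rfl
  have hXD : (Δ x : X) = DD Δ (bas n lam) (norm_bas_one n hlam) := by
    have hxx : x = (⟨bas n lam,
        by rw [mem_sphere_iff_norm, sub_zero]; exact norm_bas_one n hlam⟩ :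
        sphere (0 : C₀(Γ, ℂ)) 1) := Subtype.ext hx
    rw [hxx]; rfl
  obtain ⟨γ, hγ1, heq⟩ := QQ_all Δ hΔiso hΔsurj hlam n 1 h1
  have hstruct := rot_structure Δ hΔiso hΔsurj n h1 hlam (norm_bas_one n hγ1) heq.symm
  have hγcase : γ = lam ∨ γ = (starRingEnd ℂ) lam := by
    have := hstruct.1
    rwa [bas_apply, if_pos rfl, mul_one, mul_one] at this
  rcases hγcase with rfl | hγc
  · -- γ = lam
    left
    rw [hXD, hYD, ← heq]
  · -- γ = conj lam
    have hconj : lam • DD Δ (bas n 1) (norm_bas_one n h1)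
        = DD Δ (bas n ((starRingEnd ℂ) lam)) (norm_bas_one n (by rw [RCLike.norm_conj]; exact hlam)) := by
      rw [heq]
      exact DD_congr Δ (by rw [hγc]) _ _
    have hlamc : ‖(starRingEnd ℂ) lam‖ = 1 := by rw [RCLike.norm_conj]; exact hlam
    obtain ⟨γ', hγ'1, heq'⟩ := QQ_all Δ hΔiso hΔsurj hlamc n 1 h1
    have hstruct' := rot_structure Δ hΔiso hΔsurj n h1 hlamc (norm_bas_one n hγ'1) heq'.symm
    have hγ'case : γ' = (starRingEnd ℂ) lam ∨ γ' = lam := by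
      have := hstruct'.1
      rw [bas_apply, if_pos rfl, mul_one, mul_one] at this
      rcases this with h | h
      · exact Or.inl h
      · right; rw [h, Complex.conj_conj]
    rcases hγ'case with hcc | rfl
    · -- γ' = conj lam as well : forces lam = conj lam
      have hboth : (starRingEnd ℂ) lam • DD Δ (bas n 1) (norm_bas_one n h1)
          = lam • DD Δ (bas n 1) (norm_bas_one n h1) := by
        calc (starRingEnd ℂ) lam • DD Δ (bas n 1) (norm_bas_one n h1)
            = DD Δ (bas n γ') (norm_bas_one n hγ'1) := heq'
        _ = DD Δ (bas n ((starRingEnd ℂ) lam)) (norm_bas_one n hlamc) :=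
            DD_congr Δ (by rw [hcc]) _ _
        _ = lam • DD Δ (bas n 1) (norm_bas_one n h1) := hconj.symm
      have hD1ne : DD Δ (bas n 1) (norm_bas_one n h1) ≠ 0 := by
        intro hh
        have := norm_DD Δ (bas n 1) (norm_bas_one n h1)
        rw [hh, norm_zero] at this
        norm_num at this
      have hlc : lam = (starRingEnd ℂ) lam := by
        have hsub : (lam - (starRingEnd ℂ) lam) • DD Δ (bas n 1) (norm_bas_one n h1) = 0 := by
          rw [sub_smul, hboth, sub_self]
        rcases smul_eq_zero.1 hsub with h | h
        · exact sub_eq_zero.1 h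
        · exact absurd h hD1ne
      left
      rw [hXD, hYD]
      calc DD Δ (bas n lam) (norm_bas_one n hlam)
          = DD Δ (bas n ((starRingEnd ℂ) lam)) (norm_bas_one n hlamc) :=
            DD_congr Δ (by rw [← hlc]) _ _
      _ = lam • DD Δ (bas n 1) (norm_bas_one n h1) := hconj.symm
    · -- γ' = lam : second alternative of the theorem
      right
      rw [hXD, hYD, ← heq']
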